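/- Let x̂ ∈ ℝⁿ, A ∈ ℝ^{m×n}, b ∈ ℝᵐ, index sets Jᵢ ⊆ {1,…,n}. Suppose there exists î and ĵ ∈ J_î with x̂_ĵ ≠ 0. Then the inverse robust problem RLO-IU-SD is feasible if and only if Σ_{j} aᵢⱼ x̂ⱼ ≥ bᵢ for all i (i.e., x̂ is feasible for the nominal problem). -/

import Mathlib

/-- Feasibility of RLO-IU-SD is equivalent to nominal feasibility of xh. -/
theorem stmt_12 {n m : ℕ} (xh : Fin n → ℝ) (A : Matrix (Fin m) (Fin n) ℝ)
    (b : Fin m → ℝ) (J : Fin m → Finset (Fin n))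
    (hx : ∃ ihat : Fin m, ∃ jhat ∈ J ihat, xh jhat ≠ 0) :
    (∃ (α u lam mu : Fin m → Fin n → ℝ) (c : Fin n → ℝ) (π : Fin m → ℝ),
        (∑ j, c j * xh j = ∑ i, b i * π i) ∧
        (∀ i, ∀ j ∈ J i, α i j * xh j + u i j ≥ 0) ∧
        (∀ i, ∀ j ∈ J i, -(α i j) * xh j + u i j ≥ 0) ∧
        (∀ i, (∑ j, A i j * xh j) - ∑ j ∈ J i, u i j ≥ b i) ∧
        (∀ i, ∀ j ∈ J i, 0 ≤ α i j) ∧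
        (∑ i, π i = 1) ∧
        (∀ j, c j = (∑ i, A i j * π i)
          + ∑ i ∈ Finset.univ.filter (fun i => j ∈ J i), α i j * (lam i j - mu i j)) ∧
        (∀ i, ∀ j ∈ J i, π i = lam i j + mu i j) ∧
        (∀ i, 0 ≤ π i) ∧ (∀ i, ∀ j ∈ J i, 0 ≤ lam i j ∧ 0 ≤ mu i j)) ↔
      (∀ i, ∑ j, A i j * xh j ≥ b i) := by
  obtain ⟨ihat, jhat, hJ, hne⟩ := hx
  constructor
  · rintro ⟨α, u, lam, mu, c, π, h1, h2, h3, h4, h5, h6, h7, h8, h9, h10⟩ i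
    have hu : ∀ j ∈ J i, 0 ≤ u i j := by
      intro j hj
      have := h2 i j hj
      have := h3 i j hj
      linarith
    have hsum : (0:ℝ) ≤ ∑ j ∈ J i, u i j := Finset.sum_nonneg hu
    have := h4 i
    linarith
  · intro hfeas
    have habs : (0:ℝ) < |xh jhat| := abs_pos.mpr hne
    set s : ℝ := if 0 < xh jhat then 1 else -1 with hs
    have hs1 : s = 1 ∨ s = -1 := by
      rw [hs]; split_ifs <;> simp
    have hsx : s * xh jhat = |xh jhat| := by
      rcases lt_or_gt_of_ne hne with h | h
      · simp [hs, not_lt.mpr h.le, abs_of_neg h]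
      · simp [hs, h, abs_of_pos h]
    set sl : ℝ := (∑ j, A ihat j * xh j) - b ihat with hsl
    have hsl0 : 0 ≤ sl := by have := hfeas ihat; linarith
    have hα0 : 0 ≤ sl / |xh jhat| := div_nonneg hsl0 habs.le
    have hcancel : sl / |xh jhat| * |xh jhat| = sl := div_mul_cancel₀ sl habs.ne'
    refine ⟨fun i j => if i = ihat ∧ j = jhat then sl / |xh jhat| else 0,
      fun i j => if i = ihat ∧ j = jhat then sl else 0,
      fun i j => if i = ihat then (if j = jhat then (1 - s)/2 else 1/2) else 0,
      fun i j => if i = ihat then (if j = jhat then (1 + s)/2 else 1/2) else 0,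
      fun j => A ihat j + (if j = jhat then -(sl / |xh jhat|) * s else 0),
      fun i => if i = ihat then 1 else 0,
      ?_, ?_, ?_, ?_, ?_, ?_, ?_, ?_, ?_, ?_⟩
    · have hbπ : ∑ i, b i * (if i = ihat then (1:ℝ) else 0) = b ihat := by
        simp [mul_ite, Finset.sum_ite_eq']
      rw [hbπ]
      have h1 : ∑ j, (A ihat j + (if j = jhat then -(sl / |xh jhat|) * s else 0)) * xh j
          = (∑ j, A ihat j * xh j) + (-(sl / |xh jhat|) * s) * xh jhat := by
        rw [Finset.sum_congr rfl (fun j _ => add_mul _ _ _), Finset.sum_add_distrib]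
        congr 1
        simp [ite_mul, Finset.sum_ite_eq']
      rw [h1]
      have h2 : (-(sl / |xh jhat|) * s) * xh jhat = -sl := by
        rw [mul_assoc, hsx]
        linarith [hcancel]
      rw [h2, hsl]
      ring
    · intro i j hj
      by_cases h : i = ihat ∧ j = jhat
      · simp only [if_pos h]
        rw [h.2]
        nlinarith [neg_abs_le (xh jhat)]
      · simp [if_neg h]
    · intro i j hj
      by_cases h : i = ihat ∧ j = jhat
      · simp only [if_pos h]
        rw [h.2]
        nlinarith [le_abs_self (xh jhat)]
      · simp [if_neg h]
    · intro i
      by_cases hi : i = ihat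
      · have e1 : ∑ j ∈ J i, (if i = ihat ∧ j = jhat then sl else 0)
            = ∑ j ∈ J i, (if j = jhat then sl else 0) :=
          Finset.sum_congr rfl (fun j _ => by simp [hi])
        have hmem : jhat ∈ J i := by rw [hi]; exact hJ
        rw [e1, Finset.sum_ite_eq' (J i) jhat (fun _ => sl), if_pos hmem, hi, hsl]
        linarith
      · have e1 : ∑ j ∈ J i, (if i = ihat ∧ j = jhat then sl else 0) = 0 :=
          Finset.sum_eq_zero (fun j _ => by simp [hi])
        rw [e1]
        have := hfeas i
        linarith
    · intro i j hj
      by_cases h : i = ihat ∧ j = jhat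
      · simp only [if_pos h]; exact hα0
      · simp [if_neg h]
    · simp [Finset.sum_ite_eq']
    · intro j
      dsimp only
      have hπ : ∑ i, A i j * (if i = ihat then (1:ℝ) else 0) = A ihat j := by
        simp [mul_ite, Finset.sum_ite_eq']
      rw [hπ]
      have hterm : ∀ i, ((if i = ihat ∧ j = jhat then sl / |xh jhat| else 0) *
          ((if i = ihat then (if j = jhat then (1 - s)/2 else 1/2) else 0)
            - (if i = ihat then (if j = jhat then (1 + s)/2 else 1/2) else 0)))
          = if i = ihat ∧ j = jhat then -(sl / |xh jhat|) * s else 0 := by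
        intro i
        by_cases h : i = ihat ∧ j = jhat
        · simp only [if_pos h, if_pos h.1, if_pos h.2]
          ring
        · rw [if_neg h, if_neg h, zero_mul]
      rw [Finset.sum_congr rfl (fun i _ => hterm i)]
      by_cases hjj : j = jhat
      · have e1 : ∑ i ∈ Finset.univ.filter (fun i => j ∈ J i),
            (if i = ihat ∧ j = jhat then -(sl / |xh jhat|) * s else 0)
            = ∑ i ∈ Finset.univ.filter (fun i => j ∈ J i),
            (if i = ihat then -(sl / |xh jhat|) * s else 0) :=
          Finset.sum_congr rfl (fun i _ => by simp [hjj])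
        have hmem : ihat ∈ Finset.univ.filter (fun i => j ∈ J i) := by
          simp [hjj, hJ]
        rw [if_pos hjj, e1,
          Finset.sum_ite_eq' _ ihat (fun _ => -(sl / |xh jhat|) * s), if_pos hmem]
      · rw [if_neg hjj]
        have e1 : ∑ i ∈ Finset.univ.filter (fun i => j ∈ J i),
            (if i = ihat ∧ j = jhat then -(sl / |xh jhat|) * s else 0) = 0 :=
          Finset.sum_eq_zero (fun i _ => by simp [hjj])
        rw [e1]
    · intro i j hj
      by_cases hi : i = ihat
      · by_cases hjj : j = jhat
        · simp only [if_pos hi, if_pos hjj]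
          ring
        · simp only [if_pos hi, if_neg hjj]
          norm_num
      · simp [hi]
    · intro i
      by_cases hi : i = ihat <;> simp [hi]
    · intro i j hj
      by_cases hi : i = ihat
      · by_cases hjj : j = jhat
        · simp only [if_pos hi, if_pos hjj]
          rcases hs1 with h | h <;> rw [h] <;> norm_num
        · simp only [if_pos hi, if_neg hjj]
          norm_num
      · simp [hi]
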